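/- Let P be a finite partition of unity in C(X) consisting of projections (indicator functions of clopen sets). Then h_Σ(P) = inf_F inf_{δ>0} limsup_{i→∞} (1/d_i) log N_0(Hom(P,F,δ,σ_i), ρ_P), where N_0 denotes cardinality modulo the relation of zero ρ_P-distance and F ranges over nonempty finite subsets of G. -/

import Mathlib

open MeasureTheory Filter
open scoped ENNReal ComplexOrder

noncomputable section

namespace Sofic

/-- The ℓ²-norm on `ℂ^d` with respect to the uniform probability measure `ζ`. -/
def l2 (d : ℕ) (v : Fin d → ℂ) : ℝ :=
  Real.sqrt ((∑ k, ‖v k‖ ^ 2) / d)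

/-- The sup-norm on `ℂ^d`. -/
def linf (d : ℕ) (v : Fin d → ℂ) : ℝ := ⨆ k, ‖v k‖

/-- The uniform probability state `ζ` on `ℂ^d`. -/
def unif (d : ℕ) (v : Fin d → ℂ) : ℂ := (∑ k, v k) / d

/-- The induced action of a permutation of `{1,…,d}` on `ℂ^d`: `σ_s(f) = f ∘ σ_s⁻¹`. -/
def permAct {d : ℕ} (π : Equiv.Perm (Fin d)) (v : Fin d → ℂ) : Fin d → ℂ :=
  fun k => v (π⁻¹ k)

/-- `N_ε(S,ρ)`: the maximal cardinality of a finite `ε`-separated subset of `S` with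
respect to the pseudometric `ρ`.  (For `ε = 0` this is the cardinality modulo the relation
of zero distance.) -/
def sepNum {Y : Type*} (S : Set Y) (ρ : Y → Y → ℝ) (ε : ℝ) : ℕ∞ :=
  ⨆ t ∈ {t : Finset Y | ↑t ⊆ S ∧ ∀ x ∈ t, ∀ y ∈ t, x ≠ y → ε < ρ x y}, (t.card : ℕ∞)

/-- Extended logarithm of an extended natural number: `log 0 = -∞`, `log ∞ = ∞`. -/
def elog (n : ℕ∞) : EReal :=
  if n = ⊤ then (⊤ : EReal) else if n = 0 then (⊥ : EReal)
  else ((Real.log n.toNat : ℝ) : EReal)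

/-- A sofic approximation sequence `Σ = {σ_i : G → Sym(d_i)}` for a countable group `G`. -/
structure SoficApprox (G : Type*) [Group G] where
  d : ℕ → ℕ
  σ : ∀ i, G → Equiv.Perm (Fin (d i))
  d_pos : ∀ i, 0 < d i
  d_tendsto : Tendsto d atTop atTop
  approx_mul : ∀ s t : G, Tendsto
    (fun i => (({k : Fin (d i) | σ i (s * t) k = σ i s (σ i t k)} : Set (Fin (d i))).ncard : ℝ)
      / d i) atTop (nhds 1)
  approx_free : ∀ s t : G, s ≠ t → Tendsto
    (fun i => (({k : Fin (d i) | σ i s k ≠ σ i t k} : Set (Fin (d i))).ncard : ℝ)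
      / d i) atTop (nhds 1)

/-- A countable group is sofic if it admits a sofic approximation sequence. -/
def IsSofic (G : Type*) [Group G] : Prop := Nonempty (SoficApprox G)

variable {G : Type*} [Group G] {X : Type*} [TopologicalSpace X]

/-- The action `α_s(f) = f ∘ s⁻¹` of `G` on `C(X)` induced by a continuous action `T` of
`G` on `X`. -/
def alphaC (T : G → X → X) (hc : ∀ s, Continuous (T s)) (s : G) (f : C(X, ℂ)) : C(X, ℂ) :=
  f.comp ⟨T s⁻¹, hc s⁻¹⟩

/-- A real-valued continuous function viewed as an element of `C(X,ℂ)`. -/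
def cplx (f : C(X, ℝ)) : C(X, ℂ) :=
  ⟨fun x => (f x : ℂ), Complex.continuous_ofReal.comp f.continuous⟩

/-- The pseudometric `ρ_S` on unital homomorphisms `C(X) → ℂ^d` associated to a sequence
`S = {p_n}_{n≥1}` in the unit ball of `C_ℝ(X)` (here `p n` is `p_{n+1}`). -/
def rhoSeqC {d : ℕ} (p : ℕ → C(X, ℝ)) (φ ψ : C(X, ℂ) →ₐ[ℂ] (Fin d → ℂ)) : ℝ :=
  ∑' n : ℕ, (1 / 2) ^ (n + 1) * l2 d (φ (cplx (p n)) - ψ (cplx (p n)))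

/-- `Hom(S,F,δ,σ)` (Definition 4.1): unital homomorphisms `φ : C(X) → ℂ^d` such that
`Σ_n 2^{-n} ‖φ(α_s(p_n)) − σ_s(φ(p_n))‖₂ < δ` for all `s ∈ F`. -/
def HomTop (T : G → X → X) (hc : ∀ s, Continuous (T s)) (p : ℕ → C(X, ℝ))
    (F : Finset G) (δ : ℝ) {d : ℕ} (σ : G → Equiv.Perm (Fin d)) :
    Set (C(X, ℂ) →ₐ[ℂ] (Fin d → ℂ)) :=
  {φ | ∀ s ∈ F,
    ∑' n : ℕ, (1 / 2) ^ (n + 1) *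
      l2 d (φ (alphaC T hc s (cplx (p n))) - permAct (σ s) (φ (cplx (p n)))) < δ}

/-- The topological entropy `h_Σ(S)` of a sequence `S` in the unit ball of `C_ℝ(X)`
(Definition 4.2). -/
def hTop (T : G → X → X) (hc : ∀ s, Continuous (T s)) (SA : SoficApprox G)
    (p : ℕ → C(X, ℝ)) : EReal :=
  ⨆ ε : {ε : ℝ // 0 < ε}, ⨅ F : {F : Finset G // F.Nonempty}, ⨅ δ : {δ : ℝ // 0 < δ},
    limsup (fun i => ((((SA.d i : ℝ))⁻¹ : ℝ) : EReal) *
      elog (sepNum (HomTop T hc p (F : Finset G) (δ : ℝ) (SA.σ i)) (rhoSeqC p) (ε : ℝ)))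
      atTop

/-- A sequence in the unit ball of `C_ℝ(X)` is dynamically generating if it is not
contained in any proper `G`-invariant closed unital *-subalgebra of `C(X)`. -/
def DynGenTop (T : G → X → X) (hc : ∀ s, Continuous (T s)) (p : ℕ → C(X, ℝ)) : Prop :=
  ∀ A : StarSubalgebra ℂ C(X, ℂ), IsClosed (A : Set C(X, ℂ)) →
    (∀ (s : G) f, f ∈ A → alphaC T hc s f ∈ A) → (∀ n, cplx (p n) ∈ A) → A = ⊤

/-- The pseudometric `ρ_P(φ,ψ) = max_{p ∈ P} ‖φ(p) − ψ(p)‖₂` for a finite partition of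
unity `P` in `C(X)`. -/
def rhoPartC {n d : ℕ} (P : Fin n → C(X, ℂ)) (φ ψ : C(X, ℂ) →ₐ[ℂ] (Fin d → ℂ)) : ℝ :=
  ⨆ i : Fin n, l2 d (φ (P i) - ψ (P i))

/-- The pseudometric `ρ_{P,∞}(φ,ψ) = max_{p ∈ P} ‖φ(p) − ψ(p)‖_∞`. -/
def rhoPartCinf {n d : ℕ} (P : Fin n → C(X, ℂ)) (φ ψ : C(X, ℂ) →ₐ[ℂ] (Fin d → ℂ)) : ℝ :=
  ⨆ i : Fin n, linf d (φ (P i) - ψ (P i))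

/-- `Hom(P,F,δ,σ)` (Definition 4.7) for a finite partition of unity `P` in `C(X)`. -/
def HomTopP (T : G → X → X) (hc : ∀ s, Continuous (T s)) {n : ℕ} (P : Fin n → C(X, ℂ))
    (F : Finset G) (δ : ℝ) {d : ℕ} (σ : G → Equiv.Perm (Fin d)) :
    Set (C(X, ℂ) →ₐ[ℂ] (Fin d → ℂ)) :=
  {φ | ∀ i : Fin n, ∀ s ∈ F,
    l2 d (φ (alphaC T hc s (P i)) - permAct (σ s) (φ (P i))) < δ}

/-- The topological entropy `h_Σ(P)` of a finite partition of unity `P` in `C(X)`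
(Definition 4.7). -/
def hTopP (T : G → X → X) (hc : ∀ s, Continuous (T s)) (SA : SoficApprox G) {n : ℕ}
    (P : Fin n → C(X, ℂ)) : EReal :=
  ⨆ ε : {ε : ℝ // 0 < ε}, ⨅ F : {F : Finset G // F.Nonempty}, ⨅ δ : {δ : ℝ // 0 < δ},
    limsup (fun i => ((((SA.d i : ℝ))⁻¹ : ℝ) : EReal) *
      elog (sepNum (HomTopP T hc P (F : Finset G) (δ : ℝ) (SA.σ i)) (rhoPartC P) (ε : ℝ)))
      atTop

/-! ### Auxiliary lemmas for Proposition 4.10 -/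

section Aux

open Finset

lemma elog_zero' : elog 0 = ⊥ := by simp [elog]

lemma elog_top' : elog ⊤ = ⊤ := by simp [elog]

lemma elog_coe' (k : ℕ) (hk : k ≠ 0) : elog (k : ℕ∞) = ((Real.log k : ℝ) : EReal) := by
  simp [elog, hk]

lemma elog_mono' {a b : ℕ∞} (hab : a ≤ b) : elog a ≤ elog b := by
  rcases eq_or_ne b ⊤ with rfl | hb
  · rw [elog_top']; exact le_top
  rcases eq_or_ne a 0 with rfl | ha0
  · rw [elog_zero']; exact bot_le
  have ha : a ≠ ⊤ := fun h => hb (top_le_iff.mp (h ▸ hab))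
  lift a to ℕ using ha
  lift b to ℕ using hb
  have ha0' : a ≠ 0 := by exact_mod_cast ha0
  have hb0' : b ≠ 0 := by
    intro h
    apply ha0
    have : (a : ℕ∞) ≤ 0 := by exact_mod_cast h ▸ hab
    exact_mod_cast le_antisymm this zero_le
  rw [elog_coe' a ha0', elog_coe' b hb0']
  rw [EReal.coe_le_coe_iff]
  have hab' : (a : ℝ) ≤ b := by exact_mod_cast hab
  exact Real.log_le_log (by positivity) hab'

lemma elog_mul_le' (a : ℕ∞) (c : ℕ) (hc : 1 ≤ c) :
    elog (a * c) ≤ elog a + ((Real.log c : ℝ) : EReal) := by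
  have hc0 : c ≠ 0 := by omega
  rcases eq_or_ne a 0 with rfl | ha0
  · rw [zero_mul, elog_zero', EReal.bot_add]
  rcases eq_or_ne a ⊤ with rfl | ha
  · rw [ENat.top_mul (by exact_mod_cast hc0), elog_top',
      EReal.top_add_of_ne_bot (EReal.coe_ne_bot _)]
  lift a to ℕ using ha
  have ha0' : a ≠ 0 := by exact_mod_cast ha0
  rw [← Nat.cast_mul, elog_coe' _ (Nat.mul_ne_zero ha0' hc0), elog_coe' _ ha0', ← EReal.coe_add,
    EReal.coe_le_coe_iff, Nat.cast_mul,
    Real.log_mul (by exact_mod_cast ha0') (by exact_mod_cast hc0)]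

lemma sepNum_mono_eps {Y : Type*} (S : Set Y) (ρ : Y → Y → ℝ) {ε ε' : ℝ} (h : ε' ≤ ε) :
    sepNum S ρ ε ≤ sepNum S ρ ε' := by
  refine iSup₂_le fun t ht => ?_
  exact le_iSup₂_of_le t ⟨ht.1, fun x hx y hy hxy => lt_of_le_of_lt h (ht.2 x hx y hy hxy)⟩ le_rfl

lemma sepNum_empty' {Y : Type*} (ρ : Y → Y → ℝ) (ε : ℝ) : sepNum (∅ : Set Y) ρ ε = 0 := by
  refine le_antisymm (iSup₂_le fun t ht => ?_) zero_le
  have : t = ∅ := Finset.coe_eq_empty.mp (Set.subset_empty_iff.mp ht.1)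
  simp [this]

lemma one_le_sepNum {Y : Type*} {S : Set Y} (ρ : Y → Y → ℝ) (ε : ℝ) {x : Y} (hx : x ∈ S) :
    1 ≤ sepNum S ρ ε := by
  refine le_iSup₂_of_le {x} ⟨by simpa using hx, ?_⟩ (by simp)
  intro a ha b hb hab
  rw [Finset.mem_singleton] at ha hb
  exact absurd (ha.trans hb.symm) hab

/-- Counting functions in a Hamming ball. -/
lemma ball_card {d n m : ℕ} (hm : m ≤ d) (f : Fin d → Fin n) :
    ((Finset.univ : Finset (Fin d → Fin n)).filter fun g =>
      (Finset.univ.filter fun k => g k ≠ f k).card ≤ m).card ≤ d.choose m * n ^ m := by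
  classical
  have hcov : ((Finset.univ : Finset (Fin d → Fin n)).filter fun g =>
      (Finset.univ.filter fun k => g k ≠ f k).card ≤ m) ⊆
      (Finset.univ.powersetCard m).biUnion
        (fun s => Finset.univ.filter fun g : Fin d → Fin n => ∀ k ∉ s, g k = f k) := by
    intro g hg
    simp only [Finset.mem_filter, Finset.mem_univ, true_and] at hg
    obtain ⟨s, hsub, -, hcard⟩ := Finset.exists_subsuperset_card_eq
      (Finset.subset_univ (Finset.univ.filter fun k => g k ≠ f k)) hg (by simpa using hm)
    refine Finset.mem_biUnion.mpr ⟨s, ?_, ?_⟩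
    · simpa [Finset.mem_powersetCard_univ] using hcard
    · simp only [Finset.mem_filter, Finset.mem_univ, true_and]
      intro k hk
      by_contra hne
      exact hk (hsub (by simp [hne]))
  refine (Finset.card_le_card hcov).trans ((Finset.card_biUnion_le).trans ?_)
  have hinner : ∀ s ∈ Finset.univ.powersetCard m,
      (Finset.univ.filter fun g : Fin d → Fin n => ∀ k ∉ s, g k = f k).card ≤ n ^ m := by
    intro s hs
    have hcs : s.card = m := Finset.mem_powersetCard_univ.mp hs
    have hinj : (Finset.univ.filter fun g : Fin d → Fin n => ∀ k ∉ s, g k = f k).card ≤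
        (Finset.univ : Finset ({x // x ∈ s} → Fin n)).card := by
      refine Finset.card_le_card_of_injOn (fun g (k : {x // x ∈ s}) => g k.1)
        (fun g _ => Finset.mem_univ _) ?_
      intro g₁ hg₁ g₂ hg₂ hres
      simp only [Finset.coe_filter, Finset.mem_univ, true_and, Set.mem_setOf_eq] at hg₁ hg₂
      funext k
      by_cases hk : k ∈ s
      · exact congrFun hres ⟨k, hk⟩
      · rw [hg₁ k hk, hg₂ k hk]
    refine hinj.trans ?_
    rw [Finset.card_univ, Fintype.card_fun, Fintype.card_coe, hcs, Fintype.card_fin]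
  calc ∑ s ∈ Finset.univ.powersetCard m,
        (Finset.univ.filter fun g : Fin d → Fin n => ∀ k ∉ s, g k = f k).card
      ≤ ∑ _s ∈ (Finset.univ : Finset (Fin d)).powersetCard m, n ^ m :=
        Finset.sum_le_sum hinner
    _ = d.choose m * n ^ m := by
        rw [Finset.sum_const, smul_eq_mul, Finset.card_powersetCard, Finset.card_univ,
          Fintype.card_fin]

/-- The logarithm bound for the Hamming-ball count. -/
lemma logCnt_le {n d : ℕ} (hn : 1 ≤ n) (hd : 1 ≤ d) {ε : ℝ} (hε : 0 < ε) (hε1 : ε ≤ 1) :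
    Real.log (d.choose (min ⌊(n : ℝ) * ε ^ 2 * d⌋₊ d) * n ^ (min ⌊(n : ℝ) * ε ^ 2 * d⌋₊ d)) ≤
      4 * n * ε * d := by
  set m := min ⌊(n : ℝ) * ε ^ 2 * d⌋₊ d with hmdef
  have hnR : (1 : ℝ) ≤ n := by exact_mod_cast hn
  have hdR : (1 : ℝ) ≤ d := by exact_mod_cast hd
  rcases Nat.eq_zero_or_pos m with hm0 | hmpos
  · rw [hm0]
    simp only [Nat.choose_zero_right, pow_zero, mul_one, Nat.cast_one, Real.log_one]
    positivity
  have hmR : (1 : ℝ) ≤ m := by exact_mod_cast hmpos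
  have hmA : (m : ℝ) ≤ (n : ℝ) * ε ^ 2 * d := by
    have h1 : m ≤ ⌊(n : ℝ) * ε ^ 2 * d⌋₊ := min_le_left _ _
    calc (m : ℝ) ≤ (⌊(n : ℝ) * ε ^ 2 * d⌋₊ : ℝ) := by exact_mod_cast h1
      _ ≤ _ := Nat.floor_le (by positivity)
  have hmd : m ≤ d := min_le_right _ _
  -- choose bound
  have hchoose : (d.choose m : ℝ) * (m.factorial : ℝ) ≤ (d : ℝ) ^ m := by
    have h1 : d.choose m * m.factorial ≤ d ^ m := by
      calc d.choose m * m.factorial = m.factorial * d.choose m := mul_comm _ _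
        _ = d.descFactorial m := (Nat.descFactorial_eq_factorial_mul_choose d m).symm
        _ ≤ d ^ m := Nat.descFactorial_le_pow d m
    exact_mod_cast h1
  have hfac : ((m : ℝ)) ^ m / (m.factorial : ℝ) ≤ Real.exp m :=
    Real.pow_div_factorial_le_exp (x := (m:ℝ)) (by positivity) m
  have hfacpos : (0 : ℝ) < m.factorial := by exact_mod_cast m.factorial_pos
  have hkey : (d.choose m : ℝ) * (m : ℝ) ^ m ≤ Real.exp m * (d : ℝ) ^ m := by
    have h2 : ((m : ℝ)) ^ m ≤ Real.exp m * m.factorial := by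
      rw [div_le_iff₀ hfacpos] at hfac; exact hfac
    calc (d.choose m : ℝ) * (m : ℝ) ^ m ≤ (d.choose m : ℝ) * (Real.exp m * m.factorial) :=
          mul_le_mul_of_nonneg_left h2 (by positivity)
      _ = (d.choose m : ℝ) * (m.factorial : ℝ) * Real.exp m := by ring
      _ ≤ (d : ℝ) ^ m * Real.exp m := mul_le_mul_of_nonneg_right hchoose (Real.exp_pos _).le
      _ = Real.exp m * (d : ℝ) ^ m := mul_comm _ _
  have hchoosepos : (0 : ℝ) < d.choose m := by exact_mod_cast Nat.choose_pos hmd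
  have hmpos' : (0 : ℝ) < m := by linarith
  have hlogchoose : Real.log (d.choose m) ≤ (m : ℝ) * (1 + Real.log d - Real.log m) := by
    have h3 := Real.log_le_log (by positivity) hkey
    rw [Real.log_mul (by positivity) (by positivity), Real.log_mul (by positivity) (by positivity),
      Real.log_pow, Real.log_pow, Real.log_exp] at h3
    have hexp : (m : ℝ) * (1 + Real.log d - Real.log m) =
        (m : ℝ) + (m : ℝ) * Real.log d - (m : ℝ) * Real.log m := by ring
    linarith
  rw [Real.log_mul (by positivity) (by positivity), Real.log_pow]
  -- now the analytic estimate
  set A : ℝ := (n : ℝ) * ε ^ 2 * d with hA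
  have hApos : 0 < A := by positivity
  have hlogA : Real.log A = Real.log n + 2 * Real.log ε + Real.log d := by
    rw [hA, Real.log_mul (by positivity) (by positivity),
      Real.log_mul (by positivity) (by positivity), Real.log_pow]
    push_cast
    ring
  have hlogAm : Real.log A - Real.log m ≤ A / m - 1 := by
    have h4 : Real.log (A / m) ≤ A / m - 1 :=
      Real.log_le_sub_one_of_pos (by positivity)
    rwa [Real.log_div (ne_of_gt hApos) (ne_of_gt hmpos')] at h4
  have hloginv : -Real.log ε ≤ 1 / ε := by
    have h5 : Real.log (1 / ε) ≤ 1 / ε - 1 := Real.log_le_sub_one_of_pos (by positivity)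
    rw [Real.log_div one_ne_zero (ne_of_gt hε), Real.log_one] at h5
    linarith
  have hlogεnp : Real.log ε ≤ 0 := Real.log_nonpos hε.le hε1
  -- m * (1 + log d + log n - log m) ≤ m + m*(A/m - 1) - 2 m log ε  = A + m*(-2 log ε)
  have hmain : (m : ℝ) * (1 + Real.log d - Real.log m) + (m : ℝ) * Real.log n ≤
      A + (m : ℝ) * (-2 * Real.log ε) := by
    have heq : (m : ℝ) * (1 + Real.log d - Real.log m) + (m : ℝ) * Real.log n =
        (m : ℝ) + (m : ℝ) * (Real.log A - Real.log m) + (m : ℝ) * (-2 * Real.log ε) := by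
      rw [hlogA]; ring
    have h7 : (m : ℝ) * (Real.log A - Real.log m) ≤ (m : ℝ) * (A / m - 1) :=
      mul_le_mul_of_nonneg_left hlogAm (by positivity)
    have h8 : (m : ℝ) * (A / m - 1) = A - m := by field_simp
    linarith
  have hεinv : (m : ℝ) * (-2 * Real.log ε) ≤ 2 * n * ε * d := by
    have h9 : (m : ℝ) * (-Real.log ε) ≤ A * (1 / ε) :=
      mul_le_mul hmA hloginv (by linarith) (by positivity)
    have h10 : A * (1 / ε) = (n : ℝ) * ε * d := by
      rw [hA]; field_simp
    have h11 : (m : ℝ) * (-2 * Real.log ε) = 2 * ((m : ℝ) * (-Real.log ε)) := by ring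
    linarith
  have hAle : A ≤ (n : ℝ) * ε * d := by
    rw [hA]
    refine mul_le_mul_of_nonneg_right (mul_le_mul_of_nonneg_left ?_ (by positivity)) (by positivity)
    nlinarith
  have hfin : (0 : ℝ) ≤ (n : ℝ) * ε * d := by positivity
  linarith

end Aux
section MainCard

variable {X : Type*} [TopologicalSpace X]

/-- Key counting estimate: zero-separation numbers are controlled by `ε`-separation numbers
times the cardinality of a Hamming ball. -/
lemma main_card {n d : ℕ} (hn : 1 ≤ n) (hd : 1 ≤ d)
    (P : Fin n → C(X, ℂ)) (hPsum : ∑ i, P i = 1) (hPproj : ∀ i, P i * P i = P i)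
    {ε : ℝ} (hε : 0 < ε)
    (S : Set (C(X, ℂ) →ₐ[ℂ] (Fin d → ℂ))) :
    sepNum S (rhoPartC P) 0 ≤
      sepNum S (rhoPartC P) ε *
        ((d.choose (min ⌊(n : ℝ) * ε ^ 2 * d⌋₊ d) * n ^ (min ⌊(n : ℝ) * ε ^ 2 * d⌋₊ d) : ℕ) :
          ℕ∞) := by
  classical
  haveI : Nonempty (Fin n) := ⟨⟨0, hn⟩⟩
  have hdpos : (0 : ℝ) < d := by exact_mod_cast hd
  -- values of homomorphisms on the projections are 0 or 1
  have h01 : ∀ (φ : C(X, ℂ) →ₐ[ℂ] (Fin d → ℂ)) (i : Fin n) (k : Fin d),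
      φ (P i) k = 0 ∨ φ (P i) k = 1 := by
    intro φ i k
    have h := congrFun (show φ (P i) * φ (P i) = φ (P i) by rw [← map_mul, hPproj i]) k
    have h2 : φ (P i) k * φ (P i) k = φ (P i) k := h
    rcases mul_eq_zero.mp (show φ (P i) k * (φ (P i) k - 1) = 0 by ring_nf; linear_combination h2)
      with h3 | h3
    · exact Or.inl h3
    · exact Or.inr (sub_eq_zero.mp h3)
  have hsum : ∀ (φ : C(X, ℂ) →ₐ[ℂ] (Fin d → ℂ)) (k : Fin d), ∑ i, φ (P i) k = 1 := by
    intro φ k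
    have h := congrFun (show ∑ i, φ (P i) = 1 by rw [← map_sum, hPsum, map_one]) k
    simpa [Finset.sum_apply] using h
  have hEU : ∀ (φ : C(X, ℂ) →ₐ[ℂ] (Fin d → ℂ)) (k : Fin d), ∃! i, φ (P i) k = 1 := by
    intro φ k
    have hsplit : ∑ i, φ (P i) k = ((Finset.univ.filter fun i => φ (P i) k = 1).card : ℂ) := by
      rw [← Finset.sum_filter_add_sum_filter_not Finset.univ (fun i => φ (P i) k = 1)
          (fun i => φ (P i) k),
        Finset.sum_congr rfl (fun i hi => (Finset.mem_filter.mp hi).2), Finset.sum_const,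
        nsmul_eq_mul, mul_one,
        Finset.sum_eq_zero (fun i hi => (h01 φ i k).resolve_right (Finset.mem_filter.mp hi).2),
        add_zero]
    have h1 : ((Finset.univ.filter fun i => φ (P i) k = 1).card : ℂ) = 1 := by
      rw [← hsplit, hsum φ k]
    have hcard : (Finset.univ.filter fun i => φ (P i) k = 1).card = 1 := by exact_mod_cast h1
    obtain ⟨a, ha⟩ := Finset.card_eq_one.mp hcard
    refine ⟨a, ?_, ?_⟩
    · have : a ∈ Finset.univ.filter fun i => φ (P i) k = 1 := ha ▸ Finset.mem_singleton_self a
      exact (Finset.mem_filter.mp this).2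
    · intro y hy
      have : y ∈ Finset.univ.filter fun i => φ (P i) k = 1 :=
        Finset.mem_filter.mpr ⟨Finset.mem_univ y, hy⟩
      rw [ha] at this
      exact Finset.mem_singleton.mp this
  choose tup htup using fun (φ : C(X, ℂ) →ₐ[ℂ] (Fin d → ℂ)) (k : Fin d) => (hEU φ k).exists
  have huniq : ∀ (φ : C(X, ℂ) →ₐ[ℂ] (Fin d → ℂ)) (k : Fin d) (i : Fin n),
      φ (P i) k = 1 → i = tup φ k :=
    fun φ k i hi => (hEU φ k).unique hi (htup φ k)
  have hval : ∀ (φ : C(X, ℂ) →ₐ[ℂ] (Fin d → ℂ)) (i : Fin n) (k : Fin d),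
      φ (P i) k = if i = tup φ k then 1 else 0 := by
    intro φ i k
    by_cases h : i = tup φ k
    · rw [if_pos h, h]; exact htup φ k
    · rw [if_neg h]
      exact (h01 φ i k).resolve_right fun h1 => h (huniq φ k i h1)
  -- basic facts about l2 and rhoPartC
  have hl2sq : ∀ v : Fin d → ℂ, l2 d v ^ 2 = (∑ k, ‖v k‖ ^ 2) / d := by
    intro v
    exact Real.sq_sqrt (by positivity)
  have hl2_nonneg : ∀ v : Fin d → ℂ, 0 ≤ l2 d v := fun v => Real.sqrt_nonneg _
  have hl2_le : ∀ (φ ψ : C(X, ℂ) →ₐ[ℂ] (Fin d → ℂ)) (i : Fin n),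
      l2 d (φ (P i) - ψ (P i)) ≤ rhoPartC P φ ψ :=
    fun φ ψ i => by
      unfold rhoPartC
      exact le_ciSup (f := fun j : Fin n => l2 d (φ (P j) - ψ (P j)))
        (Set.Finite.bddAbove (Set.finite_range _)) i
  have htupeq : ∀ φ ψ : C(X, ℂ) →ₐ[ℂ] (Fin d → ℂ), tup φ = tup ψ → rhoPartC P φ ψ = 0 := by
    intro φ ψ h
    have hPeq : ∀ i, φ (P i) = ψ (P i) := by
      intro i; funext k; rw [hval φ i k, hval ψ i k, h]
    have hz : ∀ i : Fin n, l2 d (φ (P i) - ψ (P i)) = 0 := by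
      intro i
      rw [hPeq i, sub_self]
      simp [l2]
    unfold rhoPartC
    simp_rw [hz]
    exact ciSup_const
  have hrho_self : ∀ φ : C(X, ℂ) →ₐ[ℂ] (Fin d → ℂ), rhoPartC P φ φ = 0 :=
    fun φ => htupeq φ φ rfl
  have hrho_symm : ∀ φ ψ : C(X, ℂ) →ₐ[ℂ] (Fin d → ℂ), rhoPartC P φ ψ = rhoPartC P ψ φ := by
    intro φ ψ
    unfold rhoPartC
    congr 1
    funext i
    unfold l2
    congr 2
    refine Finset.sum_congr rfl fun k _ => ?_
    rw [Pi.sub_apply, Pi.sub_apply, norm_sub_rev]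
  -- the Hamming distance bound
  have hdist : ∀ φ ψ : C(X, ℂ) →ₐ[ℂ] (Fin d → ℂ), rhoPartC P φ ψ ≤ ε →
      (((Finset.univ.filter fun k => tup φ k ≠ tup ψ k).card : ℝ)) ≤ (n : ℝ) * ε ^ 2 * d := by
    intro φ ψ hρ
    have key1 : (((Finset.univ.filter fun k => tup φ k ≠ tup ψ k).card : ℝ)) ≤
        ∑ i : Fin n, ∑ k : Fin d, ‖(φ (P i) - ψ (P i)) k‖ ^ 2 := by
      rw [Finset.sum_comm]
      calc (((Finset.univ.filter fun k => tup φ k ≠ tup ψ k).card : ℝ))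
          = ∑ _k ∈ Finset.univ.filter fun k => tup φ k ≠ tup ψ k, (1 : ℝ) := by simp
        _ ≤ ∑ k ∈ Finset.univ.filter fun k => tup φ k ≠ tup ψ k,
              ∑ i : Fin n, ‖(φ (P i) - ψ (P i)) k‖ ^ 2 := by
            refine Finset.sum_le_sum fun k hk => ?_
            have hk' : tup φ k ≠ tup ψ k := (Finset.mem_filter.mp hk).2
            have h1 : ‖(φ (P (tup φ k)) - ψ (P (tup φ k))) k‖ ^ 2 = 1 := by
              rw [Pi.sub_apply, hval φ _ k, hval ψ _ k, if_pos rfl, if_neg hk']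
              simp
            calc (1 : ℝ) = ‖(φ (P (tup φ k)) - ψ (P (tup φ k))) k‖ ^ 2 := h1.symm
              _ ≤ ∑ i : Fin n, ‖(φ (P i) - ψ (P i)) k‖ ^ 2 :=
                  Finset.single_le_sum (f := fun i : Fin n => ‖(φ (P i) - ψ (P i)) k‖ ^ 2)
                    (fun i _ => by positivity) (Finset.mem_univ _)
        _ ≤ ∑ k : Fin d, ∑ i : Fin n, ‖(φ (P i) - ψ (P i)) k‖ ^ 2 :=
            Finset.sum_le_sum_of_subset_of_nonneg (Finset.subset_univ _)
              (fun k _ _ => by positivity)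
    have key2 : ∑ i : Fin n, ∑ k : Fin d, ‖(φ (P i) - ψ (P i)) k‖ ^ 2 ≤ (n : ℝ) * ε ^ 2 * d := by
      calc ∑ i : Fin n, ∑ k : Fin d, ‖(φ (P i) - ψ (P i)) k‖ ^ 2
          = ∑ i : Fin n, l2 d (φ (P i) - ψ (P i)) ^ 2 * d := by
            refine Finset.sum_congr rfl fun i _ => ?_
            rw [hl2sq]
            field_simp
        _ ≤ ∑ _i : Fin n, ε ^ 2 * d := by
            refine Finset.sum_le_sum fun i _ => ?_
            have h2 : l2 d (φ (P i) - ψ (P i)) ^ 2 ≤ ε ^ 2 :=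
              pow_le_pow_left₀ (hl2_nonneg _) ((hl2_le φ ψ i).trans hρ) 2
            exact mul_le_mul_of_nonneg_right h2 hdpos.le
        _ = (n : ℝ) * ε ^ 2 * d := by
            rw [Finset.sum_const, nsmul_eq_mul, Finset.card_univ, Fintype.card_fin]
            ring
    linarith
  -- main argument
  refine iSup₂_le fun t ht => ?_
  obtain ⟨hts, htsep⟩ := ht
  set m := min ⌊(n : ℝ) * ε ^ 2 * d⌋₊ d with hmdef
  -- a maximal ε-separated subset of t
  have hpow : (t.powerset.filter fun B => ∀ x ∈ B, ∀ y ∈ B, x ≠ y → ε < rhoPartC P x y).Nonempty :=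
    ⟨∅, by simp⟩
  obtain ⟨B, hBmem, hBmax⟩ := Finset.exists_max_image _ Finset.card hpow
  rw [Finset.mem_filter, Finset.mem_powerset] at hBmem
  obtain ⟨hBt, hBsep⟩ := hBmem
  have hcover : ∀ a ∈ t, ∃ b ∈ B, rhoPartC P a b ≤ ε := by
    intro a ha
    by_contra hcon
    push_neg at hcon
    have haB : a ∉ B := by
      intro h
      have := hcon a h
      rw [hrho_self a] at this
      linarith
    have hins : insert a B ∈
        t.powerset.filter fun B => ∀ x ∈ B, ∀ y ∈ B, x ≠ y → ε < rhoPartC P x y := by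
      rw [Finset.mem_filter, Finset.mem_powerset]
      refine ⟨Finset.insert_subset ha hBt, ?_⟩
      intro x hx y hy hxy
      rcases Finset.mem_insert.mp hx with rfl | hx' <;> rcases Finset.mem_insert.mp hy with rfl | hy'
      · exact absurd rfl hxy
      · exact hcon y hy'
      · rw [hrho_symm]; exact hcon x hx'
      · exact hBsep x hx' y hy' hxy
    have := hBmax _ hins
    rw [Finset.card_insert_of_notMem haB] at this
    omega
  -- each fiber injects into a Hamming ball
  have hcard_fiber : ∀ b : C(X, ℂ) →ₐ[ℂ] (Fin d → ℂ),
      (t.filter fun a => rhoPartC P a b ≤ ε).card ≤ d.choose m * n ^ m := by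
    intro b
    have hinj : Set.InjOn tup ↑(t.filter fun a => rhoPartC P a b ≤ ε) := by
      intro x hx y hy hxy
      by_contra hne
      have hxt : x ∈ t := (Finset.mem_filter.mp (Finset.mem_coe.mp hx)).1
      have hyt : y ∈ t := (Finset.mem_filter.mp (Finset.mem_coe.mp hy)).1
      have h0 := htsep x hxt y hyt hne
      rw [htupeq x y hxy] at h0
      exact lt_irrefl 0 h0
    have hmem : ∀ a ∈ t.filter fun a => rhoPartC P a b ≤ ε,
        tup a ∈ Finset.univ.filter fun g : Fin d → Fin n =>
          (Finset.univ.filter fun k => g k ≠ tup b k).card ≤ m := by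
      intro a ha
      obtain ⟨hat, haρ⟩ := Finset.mem_filter.mp ha
      refine Finset.mem_filter.mpr ⟨Finset.mem_univ _, Nat.le_min.mpr ⟨?_, ?_⟩⟩
      · exact Nat.le_floor (hdist a b haρ)
      · exact (Finset.card_filter_le _ _).trans (by simp)
    calc (t.filter fun a => rhoPartC P a b ≤ ε).card
        ≤ (Finset.univ.filter fun g : Fin d → Fin n =>
            (Finset.univ.filter fun k => g k ≠ tup b k).card ≤ m).card :=
          Finset.card_le_card_of_injOn tup hmem hinj
      _ ≤ d.choose m * n ^ m := ball_card (min_le_right _ _) _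
  have htcover : t ⊆ B.biUnion fun b => t.filter fun a => rhoPartC P a b ≤ ε := by
    intro a ha
    obtain ⟨b, hb, hab⟩ := hcover a ha
    exact Finset.mem_biUnion.mpr ⟨b, hb, Finset.mem_filter.mpr ⟨ha, hab⟩⟩
  have hcount : t.card ≤ B.card * (d.choose m * n ^ m) := by
    calc t.card ≤ (B.biUnion fun b => t.filter fun a => rhoPartC P a b ≤ ε).card :=
          Finset.card_le_card htcover
      _ ≤ ∑ b ∈ B, (t.filter fun a => rhoPartC P a b ≤ ε).card := Finset.card_biUnion_le
      _ ≤ ∑ _b ∈ B, (d.choose m * n ^ m) := Finset.sum_le_sum fun b _ => hcard_fiber b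
      _ = B.card * (d.choose m * n ^ m) := by rw [Finset.sum_const, smul_eq_mul]
  have hBle : (B.card : ℕ∞) ≤ sepNum S (rhoPartC P) ε :=
    le_iSup₂_of_le B ⟨(Finset.coe_subset.mpr hBt).trans hts, hBsep⟩ le_rfl
  calc (t.card : ℕ∞) ≤ ((B.card * (d.choose m * n ^ m) : ℕ) : ℕ∞) := by exact_mod_cast hcount
    _ = (B.card : ℕ∞) * ((d.choose m * n ^ m : ℕ) : ℕ∞) := by push_cast; ring
    _ ≤ sepNum S (rhoPartC P) ε * ((d.choose m * n ^ m : ℕ) : ℕ∞) := mul_le_mul_left hBle _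

end MainCard
section Final

lemma limsup_add_coe_le (u : ℕ → EReal) (c : ℝ) :
    limsup (fun i => u i + (c : EReal)) atTop ≤ limsup u atTop + (c : EReal) := by
  have h1 : Filter.limsup (fun _ : ℕ => (c : EReal)) atTop = (c : EReal) := limsup_const _
  have h := EReal.limsup_add_le (f := atTop) (u := u) (v := fun _ => (c : EReal))
    (Or.inr (by rw [h1]; exact EReal.coe_ne_top c))
    (Or.inr (by rw [h1]; exact EReal.coe_ne_bot c))
  rw [h1] at h
  exact h

lemma ereal_le_add_coe_iff {a b : EReal} (c : ℝ) : a ≤ b + (c : EReal) ↔ a - (c : EReal) ≤ b := by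
  constructor
  · intro h
    have h2 : a - (c : EReal) ≤ b + (c : EReal) - (c : EReal) := by
      rw [sub_eq_add_neg, sub_eq_add_neg]
      exact add_le_add_left h _
    rwa [EReal.add_sub_cancel_right] at h2
  · intro h
    have h2 : a - (c : EReal) + (c : EReal) ≤ b + (c : EReal) := add_le_add_left h _
    rwa [EReal.sub_add_cancel] at h2

lemma ereal_le_of_forall_le_add {a b : EReal} (h : ∀ η : ℝ, 0 < η → a ≤ b + (η : EReal)) :
    a ≤ b := by
  by_contra hlt
  push_neg at hlt
  obtain ⟨c, hc1, hc2⟩ := EReal.exists_between_coe_real hlt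
  obtain ⟨c', hc1', hc2'⟩ := EReal.exists_between_coe_real hc1
  have hcc : (c' : ℝ) < c := by exact_mod_cast hc2'
  have h3 := h (c - c') (by linarith)
  have h4 : b + ((c - c' : ℝ) : EReal) ≤ (c' : EReal) + ((c - c' : ℝ) : EReal) :=
    add_le_add_left hc1'.le _
  rw [← EReal.coe_add, (by ring : c' + (c - c') = c)] at h4
  exact absurd (h3.trans h4) (not_le_of_gt hc2)

variable {X : Type*} [TopologicalSpace X]

lemma pointwise_ineq {n d : ℕ} (hn : 1 ≤ n) (hd : 0 < d)
    (P : Fin n → C(X, ℂ)) (hPsum : ∑ i, P i = 1) (hPproj : ∀ i, P i * P i = P i)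
    {ε : ℝ} (hε : 0 < ε) (hε1 : ε ≤ 1)
    (S : Set (C(X, ℂ) →ₐ[ℂ] (Fin d → ℂ))) :
    (((d : ℝ)⁻¹ : ℝ) : EReal) * elog (sepNum S (rhoPartC P) 0) ≤
      (((d : ℝ)⁻¹ : ℝ) : EReal) * elog (sepNum S (rhoPartC P) ε) +
        ((4 * n * ε : ℝ) : EReal) := by
  have hdR : (0 : ℝ) < d := by exact_mod_cast hd
  rcases Set.eq_empty_or_nonempty S with rfl | hS
  · rw [sepNum_empty', elog_zero', EReal.coe_mul_bot_of_pos (by positivity)]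
    exact bot_le
  obtain ⟨x, hx⟩ := hS
  set mm := min ⌊(n : ℝ) * ε ^ 2 * d⌋₊ d with hmm
  set C : ℕ := d.choose mm * n ^ mm with hCdef
  have hC1 : C ≠ 0 :=
    Nat.mul_ne_zero (Nat.choose_pos (min_le_right _ _)).ne' (pow_ne_zero _ (by omega))
  have hmul : sepNum S (rhoPartC P) 0 ≤ sepNum S (rhoPartC P) ε * (C : ℕ∞) :=
    main_card hn hd P hPsum hPproj hε S
  have hlogC : Real.log C ≤ 4 * n * ε * d := by
    have h := logCnt_le hn hd hε hε1
    have hcast : ((C : ℕ) : ℝ) = ((d.choose mm : ℝ) * (n : ℝ) ^ mm) := by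
      rw [hCdef, Nat.cast_mul, Nat.cast_pow]
    rw [hcast]
    exact h
  rcases eq_or_ne (sepNum S (rhoPartC P) ε) ⊤ with hT | hT
  · rw [hT, elog_top', EReal.coe_mul_top_of_pos (by positivity),
      EReal.top_add_of_ne_bot (EReal.coe_ne_bot _)]
    exact le_top
  have hCtop : ((C : ℕ∞)) ≠ ⊤ := by simp
  have hN0top : sepNum S (rhoPartC P) 0 ≠ ⊤ :=
    ne_top_of_le_ne_top (WithTop.mul_ne_top hT hCtop) hmul
  have h1' : (1 : ℕ∞) ≤ sepNum S (rhoPartC P) ε := one_le_sepNum _ _ hx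
  have h0' : (1 : ℕ∞) ≤ sepNum S (rhoPartC P) 0 := one_le_sepNum _ _ hx
  set Nε := sepNum S (rhoPartC P) ε with hNε
  set N0 := sepNum S (rhoPartC P) 0 with hN0
  clear_value Nε N0
  lift Nε to ℕ using hT with k hk
  lift N0 to ℕ using hN0top with j hj
  have hk0 : k ≠ 0 := by
    rintro rfl; simpa using h1'
  have hj0 : j ≠ 0 := by
    rintro rfl; simpa using h0'
  rw [elog_coe' j hj0, elog_coe' k hk0, ← EReal.coe_mul, ← EReal.coe_mul, ← EReal.coe_add,
    EReal.coe_le_coe_iff]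
  have hjk : (j : ℝ) ≤ (k : ℝ) * C := by
    have h2 : j ≤ k * C := by exact_mod_cast hmul
    exact_mod_cast h2
  have hlogj : Real.log j ≤ Real.log k + 4 * n * ε * d := by
    calc Real.log j ≤ Real.log ((k : ℝ) * C) :=
          Real.log_le_log (by exact_mod_cast Nat.pos_of_ne_zero hj0) hjk
      _ = Real.log k + Real.log C :=
          Real.log_mul (Nat.cast_ne_zero.mpr hk0) (Nat.cast_ne_zero.mpr hC1)
      _ ≤ Real.log k + 4 * n * ε * d := by linarith
  have hmul2 := mul_le_mul_of_nonneg_left hlogj (inv_nonneg.mpr hdR.le)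
  have hcalc : (d : ℝ)⁻¹ * (Real.log k + 4 * n * ε * d) =
      (d : ℝ)⁻¹ * Real.log k + 4 * n * ε := by
    field_simp
  rw [hcalc] at hmul2
  exact hmul2

end Final
/-- Proposition 4.10 (`P-card top`): for a finite partition of unity `P` in `C(X)`
consisting of projections,
`h_Σ(P) = inf_F inf_{δ>0} limsup_i (1/d_i) log N_0(Hom(P,F,δ,σ_i), ρ_P)`. -/
theorem stmt10
    {X : Type*} [TopologicalSpace X] [CompactSpace X] [TopologicalSpace.MetrizableSpace X]
    {G : Type*} [Group G] [Countable G]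
    (T : G → X → X) (hc : ∀ s : G, Continuous (T s))
    (hT1 : T 1 = id) (hTmul : ∀ s t : G, T (s * t) = T s ∘ T t)
    (SA : SoficApprox G)
    {n : ℕ} (P : Fin n → C(X, ℂ))
    (hPpos : ∀ i x, 0 ≤ P i x) (hPsum : ∑ i, P i = 1)
    (hPproj : ∀ i, P i * P i = P i) :
    hTopP T hc SA P =
      ⨅ F : {F : Finset G // F.Nonempty}, ⨅ δ : {δ : ℝ // 0 < δ},
        limsup (fun i => ((((SA.d i : ℝ))⁻¹ : ℝ) : EReal) *
          elog (sepNum (HomTopP T hc P (F : Finset G) (δ : ℝ) (SA.σ i)) (rhoPartC P) 0))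
          atTop := by
  classical
  apply le_antisymm
  · -- `h_Σ(P) ≤ RHS`: any ε-separated set is 0-separated
    unfold hTopP
    refine iSup_le fun ε => le_iInf fun F => le_iInf fun δ => ?_
    refine le_trans (iInf_le _ F) (le_trans (iInf_le _ δ) ?_)
    refine Filter.limsup_le_limsup (Filter.Eventually.of_forall fun i => ?_)
    exact mul_le_mul_of_nonneg_left
      (elog_mono' (sepNum_mono_eps _ _ ε.2.le))
      (EReal.coe_nonneg.mpr (by positivity))
  · rcases Nat.eq_zero_or_pos n with hn0 | hn
    · -- degenerate case `n = 0`: the pseudometric vanishes identically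
      subst hn0
      have hρ : ∀ (d : ℕ) (φ ψ : C(X, ℂ) →ₐ[ℂ] (Fin d → ℂ)), rhoPartC P φ ψ = 0 := by
        intro d φ ψ
        unfold rhoPartC
        rw [iSup, Set.range_eq_empty, Real.sSup_empty]
      have hsep : ∀ (d : ℕ) (S : Set (C(X, ℂ) →ₐ[ℂ] (Fin d → ℂ))) (ε : ℝ),
          sepNum S (rhoPartC P) 0 ≤ sepNum S (rhoPartC P) ε := by
        intro d S ε
        refine iSup₂_le fun t ht => le_iSup₂_of_le t ⟨ht.1, fun x hx y hy hxy => ?_⟩ le_rfl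
        have h0 := ht.2 x hx y hy hxy
        rw [hρ d x y] at h0
        exact absurd h0 (lt_irrefl 0)
      unfold hTopP
      refine le_trans ?_ (le_iSup_of_le ⟨1, one_pos⟩ le_rfl)
      refine le_iInf fun F => le_iInf fun δ => ?_
      refine le_trans (iInf_le _ F) (le_trans (iInf_le _ δ) ?_)
      refine Filter.limsup_le_limsup (Filter.Eventually.of_forall fun i => ?_)
      exact mul_le_mul_of_nonneg_left (elog_mono' (hsep _ _ _))
        (EReal.coe_nonneg.mpr (by positivity))
    · -- main case `n ≥ 1`
      refine ereal_le_of_forall_le_add fun η hη => ?_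
      set ε : ℝ := min (η / (4 * n + 1)) 1 with hεdef
      have hεpos : 0 < ε := lt_min (by positivity) one_pos
      have hε1 : ε ≤ 1 := min_le_right _ _
      have hcε : 4 * n * ε ≤ η := by
        have h1 : ε ≤ η / (4 * n + 1) := min_le_left _ _
        have h2 : (0 : ℝ) < 4 * n + 1 := by positivity
        rw [le_div_iff₀ h2] at h1
        have h3 : ε * (4 * n + 1) = 4 * n * ε + ε := by ring
        linarith
      -- for every F and δ, the ε-limsup controls the 0-limsup
      have hkey : ∀ (F : {F : Finset G // F.Nonempty}) (δ : {δ : ℝ // 0 < δ}),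
          limsup (fun i => ((((SA.d i : ℝ))⁻¹ : ℝ) : EReal) *
            elog (sepNum (HomTopP T hc P (F : Finset G) (δ : ℝ) (SA.σ i)) (rhoPartC P) 0))
            atTop ≤
          limsup (fun i => ((((SA.d i : ℝ))⁻¹ : ℝ) : EReal) *
            elog (sepNum (HomTopP T hc P (F : Finset G) (δ : ℝ) (SA.σ i)) (rhoPartC P) ε))
            atTop + ((4 * n * ε : ℝ) : EReal) := by
        intro F δ
        calc limsup (fun i => ((((SA.d i : ℝ))⁻¹ : ℝ) : EReal) *
              elog (sepNum (HomTopP T hc P (F : Finset G) (δ : ℝ) (SA.σ i)) (rhoPartC P) 0))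
              atTop
            ≤ limsup (fun i => ((((SA.d i : ℝ))⁻¹ : ℝ) : EReal) *
                elog (sepNum (HomTopP T hc P (F : Finset G) (δ : ℝ) (SA.σ i)) (rhoPartC P) ε) +
                ((4 * n * ε : ℝ) : EReal)) atTop :=
              Filter.limsup_le_limsup (Filter.Eventually.of_forall fun i =>
                pointwise_ineq hn (SA.d_pos i) P hPsum hPproj hεpos hε1 _)
          _ ≤ _ := limsup_add_coe_le _ _
      have hfin : (⨅ F : {F : Finset G // F.Nonempty}, ⨅ δ : {δ : ℝ // 0 < δ},
          limsup (fun i => ((((SA.d i : ℝ))⁻¹ : ℝ) : EReal) *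
            elog (sepNum (HomTopP T hc P (F : Finset G) (δ : ℝ) (SA.σ i)) (rhoPartC P) ε))
            atTop) ≤ hTopP T hc SA P := by
        unfold hTopP
        exact le_iSup_of_le ⟨ε, hεpos⟩ le_rfl
      have hR0 : (⨅ F : {F : Finset G // F.Nonempty}, ⨅ δ : {δ : ℝ // 0 < δ},
          limsup (fun i => ((((SA.d i : ℝ))⁻¹ : ℝ) : EReal) *
            elog (sepNum (HomTopP T hc P (F : Finset G) (δ : ℝ) (SA.σ i)) (rhoPartC P) 0))
            atTop) ≤
          (⨅ F : {F : Finset G // F.Nonempty}, ⨅ δ : {δ : ℝ // 0 < δ},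
          limsup (fun i => ((((SA.d i : ℝ))⁻¹ : ℝ) : EReal) *
            elog (sepNum (HomTopP T hc P (F : Finset G) (δ : ℝ) (SA.σ i)) (rhoPartC P) ε))
            atTop) + (η : EReal) := by
        rw [ereal_le_add_coe_iff]
        refine le_iInf fun F => le_iInf fun δ => ?_
        rw [← ereal_le_add_coe_iff]
        refine le_trans (iInf_le _ F) (le_trans (iInf_le _ δ) ?_)
        refine le_trans (hkey F δ) ?_
        exact add_le_add_right (EReal.coe_le_coe_iff.mpr hcε) _
      exact hR0.trans (add_le_add_left hfin _)

end Sofic
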